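/- Let $\Lambda = \mathbb{Z}/N\mathbb{Z}$ with $N$ odd, and for $X \subseteq \Lambda$ define $n(X) = \sum_{j:\, \langle j,j+1\rangle \in \partial X} s(j)$ with $s(j) = -1$ for $j=N$ and $+1$ otherwise. Define the generalized translation on subsets by $T X = \{1\} \triangle (X+1)$ (translate by one and toggle site 1). Then $n(X) = 0$ if and only if $X = T^m \emptyset$ for some integer $m$ with $0 \le m \le 2N-1$; equivalently, $n(X)=0$ iff $X$ is the empty set, all of $\Lambda$, an initial interval $\{1,\dots,s\}$, or a terminal interval $\{s+1,\dots,N\}$. -/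

import Mathlib

open scoped Classical symmDiff

def sgn (N : ℕ) (j : ZMod N) : ℤ := if j = 0 then -1 else 1

def bdry (N : ℕ) (X : Finset (ZMod N)) (j : ZMod N) : Prop :=
  (j ∈ X ∧ j + 1 ∉ X) ∨ (j + 1 ∈ X ∧ j ∉ X)

noncomputable def nOf (N : ℕ) [NeZero N] (X : Finset (ZMod N)) : ℤ :=
  ∑ j ∈ Finset.univ.filter (fun j : ZMod N => bdry N X j), sgn N j

/-- The generalized translation `T X = {1} ∆ (X + 1)`. -/
noncomputable def T (N : ℕ) (X : Finset (ZMod N)) : Finset (ZMod N) :=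
  ({1} : Finset (ZMod N)) ∆ (X.image (· + 1))

/-! ### Auxiliary definitions -/

/-- The "initial interval" `{1, …, m}` inside `ZMod N`. -/
noncomputable def Aset (N : ℕ) [NeZero N] (m : ℕ) : Finset (ZMod N) :=
  Finset.univ.filter (fun j : ZMod N => 1 ≤ j.val ∧ j.val ≤ m)

/-- The "terminal interval" `{k+1, …, N}` inside `ZMod N`. -/
noncomputable def Bset (N : ℕ) [NeZero N] (k : ℕ) : Finset (ZMod N) :=
  Finset.univ.filter (fun j : ZMod N => j.val = 0 ∨ k < j.val)

variable {N : ℕ}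

lemma mem_Aset [NeZero N] {m : ℕ} {j : ZMod N} : j ∈ Aset N m ↔ 1 ≤ j.val ∧ j.val ≤ m := by
  simp [Aset]

lemma mem_Bset [NeZero N] {k : ℕ} {j : ZMod N} : j ∈ Bset N k ↔ j.val = 0 ∨ k < j.val := by
  simp [Bset]

lemma mem_T {X : Finset (ZMod N)} {j : ZMod N} :
    j ∈ T N X ↔ ((j = 1 ∧ ¬ j - 1 ∈ X) ∨ (j - 1 ∈ X ∧ ¬ j = 1)) := by
  have himg : j ∈ X.image (· + 1) ↔ j - 1 ∈ X := by
    simp only [Finset.mem_image]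
    constructor
    · rintro ⟨x, hx, rfl⟩; simpa using hx
    · intro h; exact ⟨j - 1, h, by ring⟩
  simp only [T, Finset.mem_symmDiff, himg, Finset.mem_singleton]

lemma cast_val_eq [NeZero N] (j : ZMod N) : ((j.val : ℕ) : ZMod N) = j :=
  ZMod.natCast_rightInverse j

lemma eq_one_iff_val (hN : 2 ≤ N) {j : ZMod N} : j = 1 ↔ j.val = 1 := by
  haveI : NeZero N := ⟨by omega⟩
  constructor
  · rintro rfl
    rw [ZMod.val_one_eq_one_mod, Nat.mod_eq_of_lt hN]
  · intro h
    have := cast_val_eq j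
    rw [h] at this
    simpa using this.symm

lemma val_sub_one [NeZero N] (hN : 2 ≤ N) (j : ZMod N) :
    (j - 1).val = if j.val = 0 then N - 1 else j.val - 1 := by
  by_cases h0 : j = 0
  · subst h0
    rw [ZMod.val_zero, if_pos rfl]
    have h : (0 - 1 : ZMod N) = ((N - 1 : ℕ) : ZMod N) := by
      rw [Nat.cast_sub (by omega : 1 ≤ N)]
      simp
    rw [h, ZMod.val_cast_of_lt (by omega)]
  · have hv1 : 1 ≤ j.val := by
      rcases Nat.eq_zero_or_pos j.val with h | h
      · exact absurd ((ZMod.val_eq_zero j).mp h) h0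
      · exact h
    have hvN : j.val < N := ZMod.val_lt j
    have h : j - 1 = ((j.val - 1 : ℕ) : ZMod N) := by
      rw [Nat.cast_sub hv1, cast_val_eq]
      simp
    rw [h, ZMod.val_cast_of_lt (by omega), if_neg (by omega)]

lemma val_add_one [NeZero N] (hN : 2 ≤ N) (j : ZMod N) :
    (j + 1).val = if j.val = N - 1 then 0 else j.val + 1 := by
  have hvN : j.val < N := ZMod.val_lt j
  by_cases h : j.val = N - 1
  · rw [if_pos h]
    have : j + 1 = ((j.val + 1 : ℕ) : ZMod N) := by rw [Nat.cast_add, cast_val_eq]; simp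
    rw [this, h]
    have : (N - 1 + 1 : ℕ) = N := by omega
    rw [this]
    simp
  · rw [if_neg h]
    have : j + 1 = ((j.val + 1 : ℕ) : ZMod N) := by rw [Nat.cast_add, cast_val_eq]; simp
    rw [this, ZMod.val_cast_of_lt (by omega)]

/-! ### The iterates of `T` on `∅` -/

lemma Aset_zero [NeZero N] : Aset N 0 = ∅ := by
  ext j
  simp only [mem_Aset, Finset.notMem_empty, iff_false]
  omega

lemma T_Aset [NeZero N] (hN : 2 ≤ N) {m : ℕ} (hm : m + 1 ≤ N - 1) :
    T N (Aset N m) = Aset N (m + 1) := by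
  ext j
  rw [mem_T, mem_Aset, mem_Aset, eq_one_iff_val hN, val_sub_one hN]
  have hvN : j.val < N := ZMod.val_lt j
  split_ifs <;> omega

lemma T_Aset_top [NeZero N] (hN : 2 ≤ N) : T N (Aset N (N - 1)) = Bset N 0 := by
  ext j
  rw [mem_T, mem_Aset, mem_Bset, eq_one_iff_val hN, val_sub_one hN]
  have hvN : j.val < N := ZMod.val_lt j
  split_ifs <;> omega

lemma T_Bset [NeZero N] (hN : 2 ≤ N) {k : ℕ} (hk : k + 1 ≤ N - 1) :
    T N (Bset N k) = Bset N (k + 1) := by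
  ext j
  rw [mem_T, mem_Bset, mem_Bset, eq_one_iff_val hN, val_sub_one hN]
  have hvN : j.val < N := ZMod.val_lt j
  split_ifs <;> omega

lemma iter_Aset [NeZero N] (hN : 2 ≤ N) : ∀ m : ℕ, m ≤ N - 1 → (T N)^[m] ∅ = Aset N m := by
  intro m
  induction m with
  | zero => intro _; simp [Aset_zero]
  | succ m ih =>
    intro hm
    rw [Function.iterate_succ_apply', ih (by omega), T_Aset hN hm]

lemma iter_Bset [NeZero N] (hN : 2 ≤ N) : ∀ k : ℕ, k ≤ N - 1 → (T N)^[N + k] ∅ = Bset N k := by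
  intro k
  induction k with
  | zero =>
    intro _
    have h : N + 0 = (N - 1) + 1 := by omega
    rw [h, Function.iterate_succ_apply', iter_Aset hN (N - 1) le_rfl, T_Aset_top hN]
  | succ k ih =>
    intro hk
    have h : N + (k + 1) = (N + k) + 1 := by omega
    rw [h, Function.iterate_succ_apply', ih (by omega), T_Bset hN hk]

lemma Bset_zero [NeZero N] (hN : 2 ≤ N) : Bset N 0 = Finset.univ := by
  ext j
  simp only [mem_Bset, Finset.mem_univ, iff_true]
  omega

/-! ### Counting boundary points -/

lemma rises_card_eq [NeZero N] (X : Finset (ZMod N)) :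
    (Finset.univ.filter (fun j : ZMod N => j + 1 ∈ X ∧ j ∉ X)).card
      = (Finset.univ.filter (fun j : ZMod N => j ∈ X ∧ j + 1 ∉ X)).card := by
  have key : ∑ j : ZMod N, (if j + 1 ∈ X then (1 : ℤ) else 0)
      = ∑ j : ZMod N, (if j ∈ X then (1 : ℤ) else 0) := by
    exact Finset.sum_equiv (Equiv.addRight (1 : ZMod N)) (by simp) (fun i _ => if_congr Iff.rfl rfl rfl)
  have key2 : ∑ j : ZMod N, ((if j + 1 ∈ X ∧ j ∉ X then (1 : ℤ) else 0)
      - (if j ∈ X ∧ j + 1 ∉ X then (1 : ℤ) else 0)) = 0 := by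
    have hpt : ∀ j : ZMod N, (if j + 1 ∈ X ∧ j ∉ X then (1 : ℤ) else 0)
        - (if j ∈ X ∧ j + 1 ∉ X then (1 : ℤ) else 0)
        = (if j + 1 ∈ X then (1 : ℤ) else 0) - (if j ∈ X then (1 : ℤ) else 0) := by
      intro j
      by_cases h1 : j + 1 ∈ X <;> by_cases h2 : j ∈ X <;> simp [h1, h2]
    rw [Finset.sum_congr rfl (fun j _ => hpt j), Finset.sum_sub_distrib, key, sub_self]
  rw [Finset.sum_sub_distrib] at key2
  rw [Finset.sum_boole, Finset.sum_boole] at key2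
  have := sub_eq_zero.mp key2
  exact_mod_cast this

lemma nOf_eq_card [NeZero N] (X : Finset (ZMod N)) :
    nOf N X = ((Finset.univ.filter (fun j : ZMod N => bdry N X j)).card : ℤ)
      - (if bdry N X 0 then 2 else 0) := by
  unfold nOf
  have h : ∀ j ∈ Finset.univ.filter (fun j : ZMod N => bdry N X j),
      sgn N j = 1 - (if j = 0 then (2 : ℤ) else 0) := by
    intro j _
    unfold sgn
    by_cases h : j = 0 <;> simp [h]
  rw [Finset.sum_congr rfl h, Finset.sum_sub_distrib, Finset.sum_const, nsmul_eq_mul, mul_one,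
    Finset.sum_ite_eq' _ (0 : ZMod N) (fun _ => (2 : ℤ))]
  simp [Finset.mem_filter]

lemma bdry_filter_eq [NeZero N] (X : Finset (ZMod N)) :
    Finset.univ.filter (fun j : ZMod N => bdry N X j)
      = Finset.univ.filter (fun j : ZMod N => j ∈ X ∧ j + 1 ∉ X)
        ∪ Finset.univ.filter (fun j : ZMod N => j + 1 ∈ X ∧ j ∉ X) := by
  ext j
  simp only [Finset.mem_filter, Finset.mem_union]
  simp [bdry, Finset.mem_filter]

lemma bdry_card [NeZero N] (X : Finset (ZMod N)) :
    (Finset.univ.filter (fun j : ZMod N => bdry N X j)).card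
      = 2 * (Finset.univ.filter (fun j : ZMod N => j ∈ X ∧ j + 1 ∉ X)).card := by
  rw [bdry_filter_eq, Finset.card_union_of_disjoint, rises_card_eq]
  · omega
  · rw [Finset.disjoint_filter]
    intro j _ h1 h2
    exact h2.2 h1.1

/-! ### Computation of `nOf` on intervals -/

lemma nOf_empty [NeZero N] : nOf N (∅ : Finset (ZMod N)) = 0 := by
  unfold nOf
  have : Finset.univ.filter (fun j : ZMod N => bdry N (∅ : Finset (ZMod N)) j) = ∅ := by
    ext j; simp [bdry]
  rw [this, Finset.sum_empty]

lemma nOf_compl [NeZero N] (X : Finset (ZMod N)) : nOf N Xᶜ = nOf N X := by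
  unfold nOf
  congr 1
  ext j
  simp only [Finset.mem_filter]
  simp [bdry, Finset.mem_compl]
  tauto

lemma Bset_eq_compl [NeZero N] (k : ℕ) : Bset N k = (Aset N k)ᶜ := by
  ext j
  simp only [mem_Aset, mem_Bset, Finset.mem_compl, not_and, not_le]
  omega

lemma bdry_Aset [NeZero N] (hN : 2 ≤ N) {m : ℕ} (hm1 : 1 ≤ m) (hm2 : m ≤ N - 1) (j : ZMod N) :
    bdry N (Aset N m) j ↔ (j = (m : ℕ) ∨ j = 0) := by
  have hvN : j.val < N := ZMod.val_lt j
  have hm : j = ((m : ℕ) : ZMod N) ↔ j.val = m := by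
    constructor
    · rintro rfl; exact ZMod.val_cast_of_lt (by omega)
    · intro h; rw [← cast_val_eq j, h]
  have h0 : j = 0 ↔ j.val = 0 := (ZMod.val_eq_zero j).symm
  unfold bdry
  rw [mem_Aset, mem_Aset, val_add_one hN, hm, h0]
  split_ifs <;> omega

lemma nOf_Aset [NeZero N] (hN : 2 ≤ N) {m : ℕ} (hm1 : 1 ≤ m) (hm2 : m ≤ N - 1) :
    nOf N (Aset N m) = 0 := by
  unfold nOf
  have hfil : Finset.univ.filter (fun j : ZMod N => bdry N (Aset N m) j)
      = {((m : ℕ) : ZMod N), 0} := by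
    ext j
    simp [bdry_Aset hN hm1 hm2, Finset.mem_insert]
  have hne : ((m : ℕ) : ZMod N) ≠ 0 := by
    intro h
    have := ZMod.val_cast_of_lt (show m < N by omega)
    rw [h, ZMod.val_zero] at this
    omega
  rw [hfil, Finset.sum_pair hne]
  unfold sgn
  rw [if_neg hne, if_pos rfl]
  ring

/-! ### The constancy lemma -/

lemma all_mem_iff [NeZero N] (X : Finset (ZMod N))
    (h : ∀ j : ZMod N, j ∈ X ↔ j + 1 ∈ X) (j : ZMod N) : j ∈ X ↔ (0 : ZMod N) ∈ X := by
  have key : ∀ k : ℕ, ((k : ℕ) : ZMod N) ∈ X ↔ (0 : ZMod N) ∈ X := by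
    intro k
    induction k with
    | zero => simp
    | succ k ih =>
      have : ((k + 1 : ℕ) : ZMod N) = ((k : ℕ) : ZMod N) + 1 := by push_cast; ring
      rw [this, ← h, ih]
  rw [← cast_val_eq j]
  exact key j.val

theorem stmt_3 (N : ℕ) [NeZero N] (hN : Odd N) (X : Finset (ZMod N)) :
    nOf N X = 0 ↔ ∃ m : ℕ, m ≤ 2 * N - 1 ∧ X = (T N)^[m] ∅ := by
  rcases le_or_gt 2 N with h2 | hlt
  · -- main case `2 ≤ N`
    constructor
    · intro h0
      have heq := nOf_eq_card (N := N) X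
      rw [bdry_card X, h0] at heq
      by_cases hb0 : bdry N X 0
      · -- exactly one fall and one rise
        have hFcard : (Finset.univ.filter (fun j : ZMod N => j ∈ X ∧ j + 1 ∉ X)).card = 1 := by
          rw [if_pos hb0] at heq; omega
        have hRcard : (Finset.univ.filter (fun j : ZMod N => j + 1 ∈ X ∧ j ∉ X)).card = 1 := by
          rw [rises_card_eq]; exact hFcard
        obtain ⟨a, ha⟩ := Finset.card_eq_one.mp hFcard
        obtain ⟨b, hbb⟩ := Finset.card_eq_one.mp hRcard
        have hfall : ∀ j : ZMod N, (j ∈ X ∧ j + 1 ∉ X) ↔ j = a := by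
          intro j
          constructor
          · intro hj
            have hmem : j ∈ Finset.univ.filter (fun j : ZMod N => j ∈ X ∧ j + 1 ∉ X) := by
              simp [hj]
            rw [ha] at hmem
            simpa using hmem
          · rintro rfl
            have hmem : j ∈ Finset.univ.filter (fun j : ZMod N => j ∈ X ∧ j + 1 ∉ X) := by
              rw [ha]; exact Finset.mem_singleton_self _
            simpa using hmem
        have hrise : ∀ j : ZMod N, (j + 1 ∈ X ∧ j ∉ X) ↔ j = b := by
          intro j
          constructor
          · intro hj
            have hmem : j ∈ Finset.univ.filter (fun j : ZMod N => j + 1 ∈ X ∧ j ∉ X) := by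
              simp [hj]
            rw [hbb] at hmem
            simpa using hmem
          · rintro rfl
            have hmem : j ∈ Finset.univ.filter (fun j : ZMod N => j + 1 ∈ X ∧ j ∉ X) := by
              rw [hbb]; exact Finset.mem_singleton_self _
            simpa using hmem
        have hstep : ∀ j : ZMod N, j ≠ a → j ≠ b → (j ∈ X ↔ j + 1 ∈ X) := by
          intro j hja hjb
          have h1 := hfall j
          have h2 := hrise j
          tauto
        rcases hb0 with ⟨h0X, h1X⟩ | ⟨h1X, h0X⟩
        · -- fall at 0 : `0 ∈ X`, `1 ∉ X`; so `a = 0` and `X` is a terminal interval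
          have ha0 : (0 : ZMod N) = a := (hfall 0).mp ⟨h0X, h1X⟩
          have hbprop : b + 1 ∈ X ∧ b ∉ X := (hrise b).mpr rfl
          have hbne : b ≠ 0 := by
            intro hbz
            exact hbprop.2 (by rw [hbz]; exact h0X)
          have hbv1 : 1 ≤ b.val := by
            rcases Nat.eq_zero_or_pos b.val with h | h
            · exact absurd ((ZMod.val_eq_zero b).mp h) hbne
            · exact h
          have hbvN : b.val < N := ZMod.val_lt b
          have claim : ∀ k : ℕ, 1 ≤ k → k ≤ N → (((k : ℕ) : ZMod N) ∈ X ↔ b.val < k) := by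
            intro k hk1
            induction k, hk1 using Nat.le_induction with
            | base =>
              intro _
              exact iff_of_false (by simpa using h1X) (by omega)
            | succ k hk ih =>
              intro hkN
              have ihh := ih (by omega)
              have hcast : ((k + 1 : ℕ) : ZMod N) = ((k : ℕ) : ZMod N) + 1 := by
                push_cast; ring
              by_cases hkb : ((k : ℕ) : ZMod N) = b
              · have hkval : k = b.val := by rw [← hkb, ZMod.val_cast_of_lt (by omega)]
                rw [hcast, hkb]
                exact iff_of_true hbprop.1 (by omega)
              · have hkvalne : k ≠ b.val := by
                  intro h
                  exact hkb (by rw [h, cast_val_eq])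
                have hka : ((k : ℕ) : ZMod N) ≠ a := by
                  rw [← ha0]
                  intro h
                  have := ZMod.val_cast_of_lt (show k < N by omega)
                  rw [h, ZMod.val_zero] at this
                  omega
                rw [hcast, ← hstep _ hka hkb, ihh]
                omega
          refine ⟨N + b.val, by omega, ?_⟩
          rw [iter_Bset h2 b.val (by omega)]
          ext j
          rw [mem_Bset]
          by_cases hj0 : j = 0
          · subst hj0
            rw [ZMod.val_zero]
            exact iff_of_true h0X (Or.inl rfl)
          · have hv1 : 1 ≤ j.val := by
              rcases Nat.eq_zero_or_pos j.val with h | h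
              · exact absurd ((ZMod.val_eq_zero j).mp h) hj0
              · exact h
            have hiter := claim j.val hv1 (ZMod.val_lt j).le
            rw [cast_val_eq j] at hiter
            rw [hiter]
            omega
        · -- rise at 0 : `1 ∈ X`, `0 ∉ X`; so `b = 0` and `X` is an initial interval
          have hb0' : (0 : ZMod N) = b := (hrise 0).mp ⟨h1X, h0X⟩
          have haprop : a ∈ X ∧ a + 1 ∉ X := (hfall a).mpr rfl
          have hane : a ≠ 0 := by
            intro haz
            exact h0X (by rw [← haz]; exact haprop.1)
          have hav1 : 1 ≤ a.val := by
            rcases Nat.eq_zero_or_pos a.val with h | h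
            · exact absurd ((ZMod.val_eq_zero a).mp h) hane
            · exact h
          have havN : a.val < N := ZMod.val_lt a
          have claim : ∀ k : ℕ, 1 ≤ k → k ≤ N → (((k : ℕ) : ZMod N) ∈ X ↔ k ≤ a.val) := by
            intro k hk1
            induction k, hk1 using Nat.le_induction with
            | base =>
              intro _
              exact iff_of_true (by simpa using h1X) (by omega)
            | succ k hk ih =>
              intro hkN
              have ihh := ih (by omega)
              have hcast : ((k + 1 : ℕ) : ZMod N) = ((k : ℕ) : ZMod N) + 1 := by
                push_cast; ring
              by_cases hka : ((k : ℕ) : ZMod N) = a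
              · have hkval : k = a.val := by rw [← hka, ZMod.val_cast_of_lt (by omega)]
                rw [hcast, hka]
                exact iff_of_false haprop.2 (by omega)
              · have hkvalne : k ≠ a.val := by
                  intro h
                  exact hka (by rw [h, cast_val_eq])
                have hkb : ((k : ℕ) : ZMod N) ≠ b := by
                  rw [← hb0']
                  intro h
                  have := ZMod.val_cast_of_lt (show k < N by omega)
                  rw [h, ZMod.val_zero] at this
                  omega
                rw [hcast, ← hstep _ hka hkb, ihh]
                omega
          refine ⟨a.val, by omega, ?_⟩
          rw [iter_Aset h2 a.val (by omega)]
          ext j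
          rw [mem_Aset]
          by_cases hj0 : j = 0
          · subst hj0
            rw [ZMod.val_zero]
            exact iff_of_false h0X (by omega)
          · have hv1 : 1 ≤ j.val := by
              rcases Nat.eq_zero_or_pos j.val with h | h
              · exact absurd ((ZMod.val_eq_zero j).mp h) hj0
              · exact h
            have hiter := claim j.val hv1 (ZMod.val_lt j).le
            rw [cast_val_eq j] at hiter
            rw [hiter]
            omega
      · -- no boundary at all : `X` is empty or everything
        have hFcard : (Finset.univ.filter (fun j : ZMod N => j ∈ X ∧ j + 1 ∉ X)).card = 0 := by
          rw [if_neg hb0] at heq; omega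
        have hRcard : (Finset.univ.filter (fun j : ZMod N => j + 1 ∈ X ∧ j ∉ X)).card = 0 := by
          rw [rises_card_eq]; exact hFcard
        have hconst : ∀ j : ZMod N, j ∈ X ↔ j + 1 ∈ X := by
          intro j
          have hf : ¬(j ∈ X ∧ j + 1 ∉ X) := by
            intro hj
            have hmem : j ∈ Finset.univ.filter (fun j : ZMod N => j ∈ X ∧ j + 1 ∉ X) := by
              simp [hj]
            rw [Finset.card_eq_zero.mp hFcard] at hmem
            simpa using hmem
          have hr : ¬(j + 1 ∈ X ∧ j ∉ X) := by
            intro hj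
            have hmem : j ∈ Finset.univ.filter (fun j : ZMod N => j + 1 ∈ X ∧ j ∉ X) := by
              simp [hj]
            rw [Finset.card_eq_zero.mp hRcard] at hmem
            simpa using hmem
          tauto
        by_cases h0X : (0 : ZMod N) ∈ X
        · refine ⟨N, by omega, ?_⟩
          have hiter : (T N)^[N] ∅ = (Finset.univ : Finset (ZMod N)) := by
            have h := iter_Bset h2 0 (by omega)
            rw [Nat.add_zero] at h
            rw [h, Bset_zero h2]
          rw [hiter]
          ext j
          simp only [Finset.mem_univ, iff_true]
          exact (all_mem_iff X hconst j).mpr h0X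
        · refine ⟨0, by omega, ?_⟩
          simp only [Function.iterate_zero, id_eq]
          ext j
          simp only [Finset.notMem_empty, iff_false]
          intro hj
          exact h0X ((all_mem_iff X hconst j).mp hj)
    · rintro ⟨m, hm, rfl⟩
      by_cases hmN : m ≤ N - 1
      · rw [iter_Aset h2 m hmN]
        rcases Nat.eq_zero_or_pos m with rfl | hm1
        · rw [Aset_zero]; exact nOf_empty
        · exact nOf_Aset h2 hm1 hmN
      · have hk : m - N ≤ N - 1 := by omega
        have hmrw : m = N + (m - N) := by omega
        rw [hmrw, iter_Bset h2 (m - N) hk, Bset_eq_compl, nOf_compl]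
        rcases Nat.eq_zero_or_pos (m - N) with he | hm1
        · rw [he, Aset_zero]; exact nOf_empty
        · exact nOf_Aset h2 hm1 hk
  · -- degenerate case `N = 1`
    have hN1 : N = 1 := by have := NeZero.ne N; omega
    subst hN1
    have hb : ∀ j : ZMod 1, ¬ bdry 1 X j := by
      intro j hj
      have hjj : j + 1 = j := Subsingleton.elim _ _
      unfold bdry at hj
      rw [hjj] at hj
      rcases hj with ⟨hj1, hj2⟩ | ⟨hj1, hj2⟩ <;> exact hj2 hj1
    have h0 : nOf 1 X = 0 := by
      unfold nOf
      rw [Finset.filter_false_of_mem (fun j _ => hb j), Finset.sum_empty]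
    refine ⟨fun _ => ?_, fun _ => h0⟩
    rcases X.eq_empty_or_nonempty with rfl | ⟨x, hx⟩
    · exact ⟨0, by omega, rfl⟩
    · refine ⟨1, by omega, ?_⟩
      have hT : (T 1)^[1] ∅ = ({1} : Finset (ZMod 1)) := by
        simp [T]
      rw [hT]
      ext j
      rw [Finset.mem_singleton]
      exact iff_of_true (by rwa [Subsingleton.elim j x]) (Subsingleton.elim _ _)
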